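/- Let P be a finite-dimensional soluble primitive left Leibniz algebra that is not a Lie algebra. Then its socle equals its left centre: soc(P) = lcent(P). -/

import Mathlib

/-- Derived series: `A⁽⁰⁾ = A`, `A⁽ⁿ⁺¹⁾ = (A⁽ⁿ⁾)²`. -/
def derSeries {F A : Type*} [Field F] [AddCommGroup A] [Module F A]
    (mul : A →ₗ[F] A →ₗ[F] A) : ℕ → Submodule F A
  | 0 => ⊤
  | k + 1 => Submodule.span F
      {x : A | ∃ a ∈ derSeries mul k, ∃ b ∈ derSeries mul k, x = mul a b}

/-- `I` is a two-sided ideal. -/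
def IsIdeal {F A : Type*} [Field F] [AddCommGroup A] [Module F A]
    (mul : A →ₗ[F] A →ₗ[F] A) (I : Submodule F A) : Prop :=
  ∀ a : A, ∀ x ∈ I, mul a x ∈ I ∧ mul x a ∈ I

/-- `I` is a minimal ideal. -/
def IsMinIdeal {F A : Type*} [Field F] [AddCommGroup A] [Module F A]
    (mul : A →ₗ[F] A →ₗ[F] A) (I : Submodule F A) : Prop :=
  IsIdeal mul I ∧ I ≠ ⊥ ∧ ∀ J : Submodule F A, IsIdeal mul J → J ≤ I → J = ⊥ ∨ J = I

/-- for a finite-dimensional soluble primitive left Leibniz algebra that is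
not a Lie algebra, the socle equals the left centre. -/
theorem socle_eq_leftCentre {F A : Type*} [Field F] [AddCommGroup A] [Module F A]
    [FiniteDimensional F A]
    (mul : A →ₗ[F] A →ₗ[F] A)
    (leibniz : ∀ a b c : A, mul a (mul b c) = mul (mul a b) c + mul b (mul a c))
    (hsol : ∃ k, derSeries mul k = ⊥)
    -- primitivity: a minimal ideal `C` which is its own centraliser
    (C : Submodule F A) (hC : IsMinIdeal mul C)
    (hcent : {x : A | ∀ c ∈ C, mul x c = 0 ∧ mul c x = 0} = (C : Set A))
    -- not a Lie algebra
    (hnotLie : ∃ a : A, mul a a ≠ 0) :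
    -- the socle (sup of the minimal ideals) equals the left centre
    ((sSup {I : Submodule F A | IsMinIdeal mul I} : Submodule F A) : Set A)
      = {z : A | ∀ x : A, mul z x = 0} := by
  obtain ⟨hCideal, hCne, hCmin⟩ := hC
  have memCent : ∀ x : A, (∀ c ∈ C, mul x c = 0 ∧ mul c x = 0) ↔ x ∈ C := by
    intro x
    have := Set.ext_iff.mp hcent x
    simpa using this
  -- every nonzero ideal contains C
  have key : ∀ I : Submodule F A, IsIdeal mul I → I ≠ ⊥ → C ≤ I := by
    intro I hI hne
    have hJideal : IsIdeal mul (I ⊓ C) := by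
      intro a x hx
      obtain ⟨hxI, hxC⟩ := hx
      exact ⟨⟨(hI a x hxI).1, (hCideal a x hxC).1⟩, ⟨(hI a x hxI).2, (hCideal a x hxC).2⟩⟩
    rcases hCmin (I ⊓ C) hJideal inf_le_right with h0 | hJC
    · exfalso
      apply hne
      rw [Submodule.eq_bot_iff]
      intro i hi
      have hiC : i ∈ C := by
        rw [← memCent]
        intro c hc
        have h1 : mul i c ∈ I ⊓ C := ⟨(hI c i hi).2, (hCideal i c hc).1⟩
        have h2 : mul c i ∈ I ⊓ C := ⟨(hI c i hi).1, (hCideal i c hc).2⟩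
        rw [h0, Submodule.mem_bot] at h1 h2
        exact ⟨h1, h2⟩
      have hmem : i ∈ I ⊓ C := ⟨hi, hiC⟩
      rw [h0, Submodule.mem_bot] at hmem
      exact hmem
    · exact hJC ▸ inf_le_left
  -- squares are in the left centre
  have sq : ∀ a x : A, mul (mul a a) x = 0 := by
    intro a x
    have h := leibniz a a x
    exact right_eq_add.mp h
  -- the left centre is an ideal
  have Lideal : IsIdeal mul (LinearMap.ker mul) := by
    intro a x hx
    have hx' : ∀ y, mul x y = 0 := by
      intro y
      have h : mul x = 0 := hx
      rw [h]; rfl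
    constructor
    · rw [LinearMap.mem_ker]
      ext y
      have h := leibniz a x y
      rw [hx' y, map_zero, hx' (mul a y), add_zero] at h
      simpa using h.symm
    · have : mul x a = 0 := hx' a
      rw [this]
      exact Submodule.zero_mem _
  have Lne : (LinearMap.ker mul : Submodule F A) ≠ ⊥ := by
    obtain ⟨a, ha⟩ := hnotLie
    intro h
    apply ha
    have hmem : mul a a ∈ LinearMap.ker mul := by
      rw [LinearMap.mem_ker]
      ext x
      simpa using sq a x
    rw [h, Submodule.mem_bot] at hmem
    exact hmem
  have hCL : C ≤ LinearMap.ker mul := key _ Lideal Lne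
  have hLC : LinearMap.ker mul ≤ C := by
    intro z hz
    rw [← memCent]
    intro c hc
    constructor
    · have h : mul z = 0 := hz
      rw [h]; rfl
    · have h : mul c = 0 := hCL hc
      rw [h]; rfl
  have hLeq : (LinearMap.ker mul : Submodule F A) = C := le_antisymm hLC hCL
  have hset : {I : Submodule F A | IsMinIdeal mul I} = {C} := by
    ext I
    simp only [Set.mem_setOf_eq, Set.mem_singleton_iff]
    constructor
    · rintro ⟨hI, hne, hmin⟩
      rcases hmin C hCideal (key I hI hne) with h | h
      · exact absurd h hCne
      · exact h.symm
    · rintro rfl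
      exact ⟨hCideal, hCne, hCmin⟩
  rw [hset, sSup_singleton, ← hLeq]
  ext z
  simp only [SetLike.mem_coe, LinearMap.mem_ker, Set.mem_setOf_eq]
  constructor
  · intro h x
    rw [h]; rfl
  · intro h
    ext x
    simpa using h x
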